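/- For any geodesic triangle ABC on the unit sphere, if D and E are the midpoints of the geodesic segments AB and BC respectively, then the spherical distance from D to E is strictly greater than half the spherical distance from A to C (assuming A, B, C are not all on one great circle and pairwise distances are less than π). -/

import Mathlib

/-- Intrinsic (geodesic) distance on the unit sphere in `ℝ³`. -/
noncomputable def sphereDist (x y : EuclideanSpace ℝ (Fin 3)) : ℝ :=
  Real.arccos (inner ℝ x y : ℝ)

open RealInnerProductSpace Matrix

private lemma midpoint_char' {n : Type*} [Fintype n] (X Y Z : EuclideanSpace ℝ n)
    (hX : ‖X‖ = 1) (hY : ‖Y‖ = 1) (hZ : ‖Z‖ = 1) (s : ℝ) (hs : 0 < s)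
    (hsq : 2 * s ^ 2 = 1 + ⟪X, Y⟫) (h1 : ⟪X, Z⟫ = s) (h2 : ⟪Y, Z⟫ = s) :
    Z = (1 / (2 * s)) • (X + Y) := by
  have hXX : ⟪X, X⟫ = 1 := by rw [real_inner_self_eq_norm_sq, hX]; norm_num
  have hYY : ⟪Y, Y⟫ = 1 := by rw [real_inner_self_eq_norm_sq, hY]; norm_num
  have hZZ : ⟪Z, Z⟫ = 1 := by rw [real_inner_self_eq_norm_sq, hZ]; norm_num
  have hYX : ⟪Y, X⟫ = ⟪X, Y⟫ := real_inner_comm _ _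
  have hZX : ⟪Z, X⟫ = s := by rw [real_inner_comm]; exact h1
  have hZY : ⟪Z, Y⟫ = s := by rw [real_inner_comm]; exact h2
  have key : ⟪Z - (1 / (2 * s)) • (X + Y), Z - (1 / (2 * s)) • (X + Y)⟫ = 0 := by
    simp only [inner_sub_left, inner_sub_right, inner_add_left, inner_add_right,
      real_inner_smul_left, real_inner_smul_right, hXX, hYY, hZZ, hYX, hZX, hZY, h1, h2]
    have hsum : ⟪X, Y⟫ = ∑ x, X x * Y x := by
      simp [PiLp.inner_apply, RCLike.inner_apply, mul_comm]
    rw [hsum] at hsq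
    field_simp
    nlinarith [hs, hsq]
  have := inner_self_eq_zero.mp key
  rw [sub_eq_zero] at this
  exact this

private lemma gram_pos' (A B C : EuclideanSpace ℝ (Fin 3))
    (hA : ‖A‖ = 1) (hB : ‖B‖ = 1) (hC : ‖C‖ = 1)
    (hind : LinearIndependent ℝ ![A, B, C]) :
    0 < 1 + 2 * ⟪A, B⟫ * ⟪B, C⟫ * ⟪A, C⟫ - ⟪A, B⟫ ^ 2 - ⟪B, C⟫ ^ 2 - ⟪A, C⟫ ^ 2 := by
  have hAA : ⟪A, A⟫ = 1 := by rw [real_inner_self_eq_norm_sq, hA]; norm_num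
  have hBB : ⟪B, B⟫ = 1 := by rw [real_inner_self_eq_norm_sq, hB]; norm_num
  have hCC : ⟪C, C⟫ = 1 := by rw [real_inner_self_eq_norm_sq, hC]; norm_num
  set M : Matrix (Fin 3) (Fin 3) ℝ := Matrix.of (fun i j => ![A, B, C] i j) with hM
  have hindM : LinearIndependent ℝ (fun i => M i) := by
    have := hind.map' (WithLp.linearEquiv 2 ℝ (Fin 3 → ℝ)).toLinearMap (LinearEquiv.ker _)
    exact this
  have hU : IsUnit M := Matrix.linearIndependent_rows_iff_isUnit.mp hindM
  have hdet : M.det ≠ 0 := ((Matrix.isUnit_iff_isUnit_det M).mp hU).ne_zero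
  have hip : ∀ x y : EuclideanSpace ℝ (Fin 3), ∑ k, x k * y k = ⟪x, y⟫ := by
    intro x y; simp [PiLp.inner_apply, RCLike.inner_apply, mul_comm]
  have entry : ∀ i j, (M * Mᵀ) i j = ⟪![A, B, C] i, ![A, B, C] j⟫ := by
    intro i j
    rw [Matrix.mul_apply, ← hip]
    rfl
  have hG : M * Mᵀ = !![1, ⟪A, B⟫, ⟪A, C⟫; ⟪A, B⟫, 1, ⟪B, C⟫; ⟪A, C⟫, ⟪B, C⟫, 1] := by
    ext i j
    rw [entry]
    fin_cases i <;> fin_cases j <;>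
      simp [hA, hB, hC, hAA, hBB, hCC, real_inner_comm B A, real_inner_comm C A, real_inner_comm C B]
  have hpos : 0 < (M * Mᵀ).det := by
    rw [Matrix.det_mul, Matrix.det_transpose]
    exact mul_self_pos.mpr hdet
  rw [hG, Matrix.det_fin_three] at hpos
  norm_num at hpos
  simp at hpos
  nlinarith [hpos]

private lemma half_char' (X Y Z : EuclideanSpace ℝ (Fin 3))
    (hX : ‖X‖ = 1) (hY : ‖Y‖ = 1) (hZ : ‖Z‖ = 1)
    (hlt : Real.arccos ⟪X, Y⟫ < Real.pi)
    (h1 : Real.arccos ⟪X, Z⟫ = Real.arccos ⟪X, Y⟫ / 2)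
    (h2 : Real.arccos ⟪Z, Y⟫ = Real.arccos ⟪X, Y⟫ / 2) :
    Z = (1 / (2 * Real.sqrt ((1 + ⟪X, Y⟫) / 2))) • (X + Y) := by
  have habs : |⟪X, Y⟫| ≤ 1 := by
    have := abs_real_inner_le_norm X Y
    rwa [hX, hY, mul_one] at this
  obtain ⟨hm1, hm2⟩ := abs_le.mp habs
  have hmne : ⟪X, Y⟫ ≠ -1 := by
    intro h
    rw [h, Real.arccos_neg_one] at hlt
    exact lt_irrefl _ hlt
  have hmgt : -1 < ⟪X, Y⟫ := lt_of_le_of_ne hm1 (Ne.symm hmne)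
  set s := Real.sqrt ((1 + ⟪X, Y⟫) / 2) with hsdef
  have hs : 0 < s := Real.sqrt_pos.mpr (by linarith)
  have hsq : 2 * s ^ 2 = 1 + ⟪X, Y⟫ := by
    rw [hsdef, Real.sq_sqrt (by linarith)]; ring
  have hcos : Real.cos (Real.arccos ⟪X, Y⟫ / 2) = s := by
    rw [Real.cos_half (by linarith [Real.arccos_nonneg ⟪X, Y⟫, Real.pi_pos])
      (Real.arccos_le_pi ⟪X, Y⟫), Real.cos_arccos hm1 hm2]
  have hXZ : ⟪X, Z⟫ = s := by
    have hb : |⟪X, Z⟫| ≤ 1 := by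
      have := abs_real_inner_le_norm X Z
      rwa [hX, hZ, mul_one] at this
    obtain ⟨hb1, hb2⟩ := abs_le.mp hb
    rw [← Real.cos_arccos hb1 hb2, h1, hcos]
  have hYZ : ⟪Y, Z⟫ = s := by
    have hb : |⟪Z, Y⟫| ≤ 1 := by
      have := abs_real_inner_le_norm Z Y
      rwa [hZ, hY, mul_one] at this
    obtain ⟨hb1, hb2⟩ := abs_le.mp hb
    rw [real_inner_comm, ← Real.cos_arccos hb1 hb2, h2, hcos]
  exact midpoint_char' X Y Z hX hY hZ s hs hsq hXZ hYZ

private lemma inner_DE' (A B C D E : EuclideanSpace ℝ (Fin 3)) (s w : ℝ)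
    (hs : 0 < s) (hw : 0 < w) (hBB : ⟪B, B⟫ = 1)
    (hDeq : D = (1 / (2 * s)) • (A + B)) (hEeq : E = (1 / (2 * w)) • (B + C)) :
    ⟪D, E⟫ = (1 + ⟪A, B⟫ + ⟪B, C⟫ + ⟪A, C⟫) / (4 * s * w) := by
  rw [hDeq, hEeq]
  simp only [inner_smul_left, inner_smul_right, inner_add_left, inner_add_right,
    RCLike.star_def, conj_trivial]
  rw [hBB, real_inner_comm B A]
  field_simp
  ring

theorem sphere_midpoint_inequality
    (A B C D E : EuclideanSpace ℝ (Fin 3))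
    (hA : ‖A‖ = 1) (hB : ‖B‖ = 1) (hC : ‖C‖ = 1)
    (hind : LinearIndependent ℝ ![A, B, C])
    (hAB : sphereDist A B < Real.pi)
    (hBC : sphereDist B C < Real.pi)
    (hAC : sphereDist A C < Real.pi)
    (hD : ‖D‖ = 1)
    (hDA : sphereDist A D = sphereDist A B / 2)
    (hDB : sphereDist D B = sphereDist A B / 2)
    (hE : ‖E‖ = 1)
    (hEB : sphereDist B E = sphereDist B C / 2)
    (hEC : sphereDist E C = sphereDist B C / 2) :
    sphereDist D E > sphereDist A C / 2 := by
  simp only [sphereDist] at hAB hBC hAC hDA hDB hEB hEC ⊢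
  -- bounds on inner products
  have hub : |⟪A, B⟫| ≤ 1 := by
    have := abs_real_inner_le_norm A B; rwa [hA, hB, mul_one] at this
  have hvb : |⟪B, C⟫| ≤ 1 := by
    have := abs_real_inner_le_norm B C; rwa [hB, hC, mul_one] at this
  have htb : |⟪A, C⟫| ≤ 1 := by
    have := abs_real_inner_le_norm A C; rwa [hA, hC, mul_one] at this
  obtain ⟨hu1, hu2⟩ := abs_le.mp hub
  obtain ⟨hv1, hv2⟩ := abs_le.mp hvb
  obtain ⟨ht1, ht2⟩ := abs_le.mp htb
  have hugt : -1 < ⟪A, B⟫ := by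
    rcases lt_or_eq_of_le hu1 with h | h
    · exact h
    · rw [← h, Real.arccos_neg_one] at hAB; exact absurd hAB (lt_irrefl _)
  have hvgt : -1 < ⟪B, C⟫ := by
    rcases lt_or_eq_of_le hv1 with h | h
    · exact h
    · rw [← h, Real.arccos_neg_one] at hBC; exact absurd hBC (lt_irrefl _)
  have htgt : -1 < ⟪A, C⟫ := by
    rcases lt_or_eq_of_le ht1 with h | h
    · exact h
    · rw [← h, Real.arccos_neg_one] at hAC; exact absurd hAC (lt_irrefl _)
  -- identify D and E
  have hDeq := half_char' A B D hA hB hD hAB hDA hDB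
  have hEeq := half_char' B C E hB hC hE hBC hEB hEC
  obtain ⟨s, hsdef⟩ : ∃ s, s = Real.sqrt ((1 + ⟪A, B⟫) / 2) := ⟨_, rfl⟩
  obtain ⟨w, hwdef⟩ : ∃ w, w = Real.sqrt ((1 + ⟪B, C⟫) / 2) := ⟨_, rfl⟩
  obtain ⟨r, hrdef⟩ : ∃ r, r = Real.sqrt ((1 + ⟪A, C⟫) / 2) := ⟨_, rfl⟩
  rw [← hsdef] at hDeq
  rw [← hwdef] at hEeq
  have hs : 0 < s := hsdef ▸ Real.sqrt_pos.mpr (by linarith)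
  have hw : 0 < w := hwdef ▸ Real.sqrt_pos.mpr (by linarith)
  have hr : 0 < r := hrdef ▸ Real.sqrt_pos.mpr (by linarith)
  have hs2 : 2 * s ^ 2 = 1 + ⟪A, B⟫ := by
    rw [hsdef, Real.sq_sqrt (by linarith)]; ring
  have hw2 : 2 * w ^ 2 = 1 + ⟪B, C⟫ := by
    rw [hwdef, Real.sq_sqrt (by linarith)]; ring
  have hr2 : 2 * r ^ 2 = 1 + ⟪A, C⟫ := by
    rw [hrdef, Real.sq_sqrt (by linarith)]; ring
  have hBB : ⟪B, B⟫ = 1 := by rw [real_inner_self_eq_norm_sq, hB]; norm_num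
  have hDE := inner_DE' A B C D E s w hs hw hBB hDeq hEeq
  -- the Gram determinant inequality
  have hgram := gram_pos' A B C hA hB hC hind
  have hDEb : |⟪D, E⟫| ≤ 1 := by
    have := abs_real_inner_le_norm D E; rwa [hD, hE, mul_one] at this
  obtain ⟨hDE1, hDE2⟩ := abs_le.mp hDEb
  generalize hugen : (⟪A, B⟫ : ℝ) = u at hu1 hu2 hugt hs2 hDE hgram
  generalize hvgen : (⟪B, C⟫ : ℝ) = v at hv1 hv2 hvgt hw2 hDE hgram
  generalize htgen : (⟪A, C⟫ : ℝ) = t at ht1 ht2 htgt hr2 hrdef hDE hgram ⊢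
  generalize hdegen : (⟪D, E⟫ : ℝ) = dE at hDE hDE1 hDE2 ⊢
  clear hDeq hEeq hDEb hub hvb htb hAB hBC hAC hDA hDB hEB hEC hugen hvgen htgen hdegen
    hBB hind hA hB hC hD hE D E hsdef hwdef A B C
  have hrle : r ≤ 1 := by nlinarith [hr, hr2]
  have hkey : (1 + u + v + t) ^ 2 < 2 * (1 + u) * (1 + v) * (1 + t) := by
    nlinarith [hgram]
  have hY : 0 < 4 * s * w * r := by positivity
  have hY2 : (4 * s * w * r) ^ 2 = 2 * (1 + u) * (1 + v) * (1 + t) := by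
    rw [← hs2, ← hw2, ← hr2]; ring
  have hlt2 : 1 + u + v + t < 4 * s * w * r := by
    by_contra hcon
    push_neg at hcon
    have hsq : (4 * s * w * r) * (4 * s * w * r) ≤ (1 + u + v + t) * (1 + u + v + t) :=
      mul_self_le_mul_self hY.le hcon
    nlinarith [hkey, hY2, hsq]
  have hDElt : dE < r := by
    rw [hDE, div_lt_iff₀ (by positivity : (0:ℝ) < 4 * s * w)]
    nlinarith [hlt2]
  -- identify arccos ⟪A,C⟫ / 2 with arccos r
  have harc : Real.arccos t / 2 = Real.arccos r := by
    have hc : Real.cos (Real.arccos t / 2) = r := by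
      rw [Real.cos_half (by linarith [Real.arccos_nonneg t, Real.pi_pos])
        (Real.arccos_le_pi t), Real.cos_arccos ht1 ht2, hrdef]
    have ha : Real.arccos (Real.cos (Real.arccos t / 2)) = Real.arccos t / 2 :=
      Real.arccos_cos (by linarith [Real.arccos_nonneg t])
        (by linarith [Real.arccos_le_pi t, Real.pi_pos])
    rw [← ha, hc]
  rw [harc]
  exact Real.strictAntiOn_arccos ⟨hDE1, hDE2⟩ ⟨by linarith, hrle⟩ hDElt
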